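/- Let m*(s,t) = 1 + Σ_{k≥1} s^k ∫_0^t e^{−λy} y^{kα−1}/Γ(kα) dy. Then for s, r in a neighborhood of 0 with r > 0 and |s| < (r+λ)^α, the double transform satisfies ∫_0^∞ e^{−rt} m*(is,t) dt = (r+λ)^α / ( r((r+λ)^α − is) ). -/

import Mathlib

set_option maxHeartbeats 1000000
open MeasureTheory Set Real
open scoped ENNReal NNReal

lemma aux_exp_int {r : ℝ} (hr : 0 < r) (y : ℝ) :
    ∫ t in Ioi y, Real.exp (-(r*t)) = Real.exp (-(r*y)) / r := by
  have := integral_comp_mul_left_Ioi (fun x => Real.exp (-x)) y hr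
  simpa [integral_exp_neg_Ioi, integral_exp_Iic, smul_eq_mul, div_eq_inv_mul] using this

lemma aux_rpow_exp_int {a r : ℝ} (ha : 0 < a) (hr : 0 < r) :
    IntegrableOn (fun t : ℝ => Real.exp (-(r*t)) * t ^ (a-1)) (Ioi 0) := by
  have h0 : IntegrableOn (fun x : ℝ => Real.exp (-x) * x ^ (a - 1)) (Ioi 0) :=
    Real.GammaIntegral_convergent ha
  have h1 : IntegrableOn (fun x : ℝ => Real.exp (-(r*x)) * (r*x) ^ (a - 1)) (Ioi 0) := by
    have := (integrableOn_Ioi_comp_mul_left_iff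
      (fun x : ℝ => Real.exp (-x) * x ^ (a - 1)) 0 hr).2 (by simpa using h0)
    simpa using this
  have h2 : IntegrableOn
      (fun x : ℝ => ((r:ℝ) ^ (a-1))⁻¹ * (Real.exp (-(r*x)) * (r*x) ^ (a - 1))) (Ioi 0) :=
    h1.const_mul _
  refine h2.congr_fun (fun x hx => ?_) measurableSet_Ioi
  simp only [mem_Ioi] at hx
  beta_reduce
  rw [Real.mul_rpow hr.le hx.le]
  field_simp [(Real.rpow_pos_of_pos hr (a-1)).ne']

section L1
variable {β lam r : ℝ}

lemma aux_g_meas (lam β : ℝ) :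
    Measurable (fun y : ℝ => Real.exp (-lam*y) * y^(β-1)) :=
  by fun_prop

lemma aux_g_int (hβ : 0 < β) (hlam : 0 ≤ lam) (t : ℝ) :
    IntegrableOn (fun y : ℝ => Real.exp (-lam*y) * y^(β-1)) (Ioc 0 t) := by
  rcases le_or_gt t 0 with ht | ht
  · rw [Ioc_eq_empty (not_lt.2 ht)]
    exact integrableOn_empty
  · have h1 : IntegrableOn (fun y : ℝ => y^(β-1)) (Ioc 0 t) :=
      (intervalIntegral.intervalIntegrable_rpow' (by linarith)).1
    refine Integrable.mono' h1 ((aux_g_meas lam β).aestronglyMeasurable.restrict) ?_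
    refine (ae_restrict_iff' measurableSet_Ioc).2 (Filter.Eventually.of_forall fun y hy => ?_)
    have hy0 : 0 < y := hy.1
    rw [Real.norm_eq_abs, abs_of_nonneg (by positivity)]
    have : Real.exp (-lam*y) ≤ 1 := by
      rw [Real.exp_le_one_iff]; nlinarith
    nlinarith [Real.rpow_nonneg hy0.le (β-1) ]

lemma aux_F_nonneg (lam β : ℝ) (t : ℝ) :
    0 ≤ ∫ y in Ioc (0:ℝ) t, Real.exp (-lam*y) * y^(β-1) := by
  refine setIntegral_nonneg measurableSet_Ioc fun y hy => ?_
  have : 0 < y := hy.1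
  positivity

lemma aux_F_le (hβ : 0 < β) (hlam : 0 ≤ lam) {t : ℝ} (ht : 0 < t) :
    ∫ y in Ioc (0:ℝ) t, Real.exp (-lam*y) * y^(β-1) ≤ t^β / β := by
  have h1 : IntegrableOn (fun y : ℝ => y^(β-1)) (Ioc 0 t) :=
    (intervalIntegral.intervalIntegrable_rpow' (by linarith)).1
  have hmono : ∫ y in Ioc (0:ℝ) t, Real.exp (-lam*y) * y^(β-1)
      ≤ ∫ y in Ioc (0:ℝ) t, y^(β-1) := by
    refine setIntegral_mono_on (aux_g_int hβ hlam t) h1 measurableSet_Ioc fun y hy => ?_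
    have hy0 : 0 < y := hy.1
    have : Real.exp (-lam*y) ≤ 1 := by rw [Real.exp_le_one_iff]; nlinarith
    nlinarith [Real.rpow_nonneg hy0.le (β-1)]
  have hval : ∫ y in Ioc (0:ℝ) t, y^(β-1) = t^β / β := by
    rw [← intervalIntegral.integral_of_le ht.le,
      integral_rpow (Or.inl (by linarith))]
    rw [Real.zero_rpow (by linarith : β - 1 + 1 ≠ 0)]
    ring_nf
  linarith

lemma aux_laplace_primitive (hβ : 0 < β) (hlam : 0 ≤ lam) (hr : 0 < r) :
    IntegrableOn (fun t : ℝ => Real.exp (-(r*t)) *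
        ∫ y in Ioc (0:ℝ) t, Real.exp (-lam*y) * y^(β-1)) (Ioi 0) ∧
    ∫ t in Ioi (0:ℝ), Real.exp (-(r*t)) * ∫ y in Ioc (0:ℝ) t, Real.exp (-lam*y) * y^(β-1)
      = (1/r) * ((1/(r+lam))^β * Real.Gamma β) := by
  have hb : 0 < r + lam := by linarith
  set g : ℝ → ℝ := fun y => Real.exp (-lam*y) * y^(β-1) with hg_def
  set f2 : ℝ → ℝ → ℝ := fun t y => (Ioc (0:ℝ) t).indicator (fun y => Real.exp (-(r*t)) * g y) y
    with hf2_def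
  -- measurability on the product
  have huncurry : Function.uncurry f2 = Set.indicator {q : ℝ × ℝ | 0 < q.2 ∧ q.2 ≤ q.1}
      (fun q => Real.exp (-(r*q.1)) * g q.2) := by
    funext q
    by_cases h : q.2 ∈ Ioc 0 q.1
    · rw [Function.uncurry, hf2_def]
      simp only [indicator_of_mem h]
      rw [indicator_of_mem (by exact ⟨h.1, h.2⟩)]
    · rw [Function.uncurry, hf2_def]
      simp only [indicator_of_notMem h]
      rw [indicator_of_notMem (by simpa [mem_Ioc] using h)]
  have hmeas2 : Measurable (Function.uncurry f2) := by
    rw [huncurry]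
    refine Measurable.indicator ?_ ?_
    · fun_prop
    · exact (measurableSet_lt measurable_const measurable_snd).inter
        (measurableSet_le measurable_snd measurable_fst)
  have hf2_aesm : AEStronglyMeasurable (Function.uncurry f2)
      ((volume.restrict (Ioi (0:ℝ))).prod volume) := hmeas2.aestronglyMeasurable
  -- integral in y for fixed t
  have hInty : ∀ t : ℝ, Integrable (f2 t) := by
    intro t
    rw [hf2_def]
    simp only
    rw [integrable_indicator_iff measurableSet_Ioc]
    exact ((aux_g_int hβ hlam t).const_mul _)
  have hnormy : ∀ t ∈ Ioi (0:ℝ), (∫ y, ‖f2 t y‖) =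
      Real.exp (-(r*t)) * ∫ y in Ioc (0:ℝ) t, g y := by
    intro t _
    have : (fun y => ‖f2 t y‖) =
        (Ioc (0:ℝ) t).indicator (fun y => ‖Real.exp (-(r*t)) * g y‖) := by
      funext y
      rw [hf2_def]
      simp only [norm_indicator_eq_indicator_norm]
    rw [this, integral_indicator measurableSet_Ioc]
    rw [← integral_const_mul]
    refine setIntegral_congr_fun measurableSet_Ioc fun y hy => ?_
    have hy0 : 0 < y := hy.1
    rw [Real.norm_eq_abs, abs_of_nonneg (by positivity)]
  -- integrability on the product
  have hprod : Integrable (Function.uncurry f2)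
      ((volume.restrict (Ioi (0:ℝ))).prod volume) := by
    rw [integrable_prod_iff hf2_aesm]
    constructor
    · exact Filter.Eventually.of_forall fun t => (hInty t)
    · have hbound : IntegrableOn
          (fun t : ℝ => (1/β) * (Real.exp (-(r*t)) * t ^ ((β+1)-1))) (Ioi 0) :=
        (aux_rpow_exp_int (by linarith) hr).const_mul _
      refine Integrable.mono' hbound (hf2_aesm.norm.integral_prod_right') ?_
      refine (ae_restrict_iff' measurableSet_Ioi).2 (Filter.Eventually.of_forall fun t ht => ?_)
      have ht0 : 0 < t := ht
      have h1 : (∫ y, ‖f2 t y‖) = Real.exp (-(r*t)) * ∫ y in Ioc (0:ℝ) t, g y :=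
        hnormy t ht
      simp only [Function.uncurry_apply_pair]
      rw [Real.norm_eq_abs]
      have h2 : 0 ≤ ∫ y in Ioc (0:ℝ) t, g y := aux_F_nonneg lam β t
      have h3 : (∫ y in Ioc (0:ℝ) t, g y) ≤ t^β / β := aux_F_le hβ hlam ht0
      have h4 : (0:ℝ) < Real.exp (-(r*t)) := Real.exp_pos _
      rw [show ((β:ℝ)+1)-1 = β by ring]
      have h5 : |∫ y, ‖f2 t y‖| = Real.exp (-(r*t)) * ∫ y in Ioc (0:ℝ) t, g y := by
        rw [h1]; exact abs_of_nonneg (mul_nonneg h4.le h2)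
      rw [h5]
      calc Real.exp (-(r*t)) * ∫ y in Ioc (0:ℝ) t, g y
          ≤ Real.exp (-(r*t)) * (t^β/β) := by nlinarith
        _ = 1/β * (Real.exp (-(r*t)) * t^β) := by ring
  refine ⟨?_, ?_⟩
  · have := hprod.integral_prod_left
    refine this.congr ((ae_restrict_iff' measurableSet_Ioi).2
      (Filter.Eventually.of_forall fun t ht => ?_))
    simp only [Function.uncurry_apply_pair, hf2_def]
    rw [integral_indicator measurableSet_Ioc, ← integral_const_mul]
  · have hswap := integral_integral_swap (f := f2) hprod
    have hleft : (∫ t in Ioi (0:ℝ), ∫ y, f2 t y)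
        = ∫ t in Ioi (0:ℝ), Real.exp (-(r*t)) * ∫ y in Ioc (0:ℝ) t, g y := by
      refine setIntegral_congr_fun measurableSet_Ioi fun t ht => ?_
      rw [hf2_def]
      simp only
      rw [integral_indicator measurableSet_Ioc, ← integral_const_mul]
    have hinner : ∀ y : ℝ, (∫ t in Ioi (0:ℝ), f2 t y)
        = (Ioi (0:ℝ)).indicator (fun y => g y * (Real.exp (-(r*y)) / r)) y := by
      intro y
      rcases le_or_gt y 0 with hy | hy
      · have : ∀ t, f2 t y = 0 := by
          intro t
          rw [hf2_def]
          simp only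
          rw [indicator_of_notMem (fun hc => absurd hc.1 (not_lt.2 hy))]
        simp only [this, integral_zero]
        rw [indicator_of_notMem (by simpa using hy)]
      · have hfy : ∀ t, f2 t y = (Ici y).indicator (fun t => Real.exp (-(r*t)) * g y) t := by
          intro t
          rw [hf2_def]
          by_cases h : y ≤ t
          · simp only
            rw [indicator_of_mem (by exact ⟨hy, h⟩), indicator_of_mem (by exact h)]
          · simp only
            rw [indicator_of_notMem (fun hc => h hc.2),
              indicator_of_notMem (by simpa using h)]
        simp_rw [hfy]
        rw [setIntegral_indicator measurableSet_Ici]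
        rw [show Ioi (0:ℝ) ∩ Ici y = Ici y from
          inter_eq_self_of_subset_right (fun x hx => lt_of_lt_of_le hy hx)]
        rw [integral_Ici_eq_integral_Ioi, integral_mul_const, aux_exp_int hr y]
        rw [indicator_of_mem (by simpa using hy)]
        ring
    rw [← hleft, hswap]
    calc (∫ y : ℝ, ∫ t in Ioi (0:ℝ), f2 t y)
        = ∫ y : ℝ, (Ioi (0:ℝ)).indicator (fun y => g y * (Real.exp (-(r*y)) / r)) y := by
          simp_rw [hinner]
      _ = ∫ y in Ioi (0:ℝ), g y * (Real.exp (-(r*y)) / r) := by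
          rw [integral_indicator measurableSet_Ioi]
      _ = ∫ y in Ioi (0:ℝ), (1/r) * (y ^ (β-1) * Real.exp (-((r+lam)*y))) := by
          refine setIntegral_congr_fun measurableSet_Ioi fun y hy => ?_
          rw [hg_def]
          simp only
          rw [show -((r+lam)*y) = -lam*y + -(r*y) by ring, Real.exp_add]
          ring
      _ = (1/r) * ((1/(r+lam))^β * Real.Gamma β) := by
          rw [integral_const_mul, Real.integral_rpow_mul_exp_neg_mul_Ioi hβ hb]

lemma aux_F_mono {lam β : ℝ} (hβ : 0 < β) (hlam : 0 ≤ lam) :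
    Monotone (fun t => ∫ y in Ioc (0:ℝ) t, Real.exp (-lam*y) * y^(β-1)) := by
  intro t1 t2 h12
  refine setIntegral_mono_set (aux_g_int hβ hlam t2) ?_ ?_
  · refine (ae_restrict_iff' measurableSet_Ioc).2 (Filter.Eventually.of_forall fun y hy => ?_)
    have : 0 < y := hy.1
    positivity
  · exact (Ioc_subset_Ioc_right h12).eventuallyLE

noncomputable def auxPsi (lam α : ℝ) : ℕ → ℝ → ℂ
  | 0, _ => 1
  | (k+1), t => (((∫ y in Ioc (0:ℝ) t, Real.exp (-lam*y) * y^(((k:ℝ)+1)*α-1)) /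
      Real.Gamma (((k:ℝ)+1)*α) : ℝ) : ℂ)

/-- Double (Laplace–Fourier) transform of the EML* mgf:
`∫_0^∞ e^{−rt} m*(is,t) dt = (r+λ)^α / (r((r+λ)^α − is))`
for `r > 0` and `|s| < (r+λ)^α`. -/

theorem stmt_7 (lam α : ℝ) (hlam : 0 ≤ lam) (hα0 : 0 < α) (hα1 : α ≤ 1)
    (s r : ℝ) (hr : 0 < r) (hs : |s| < (r + lam) ^ α) :
    ∫ t in Set.Ioi (0 : ℝ),
        Complex.exp (-(r : ℂ) * t) *
          (1 + ∑' k : ℕ, (Complex.I * (s : ℂ)) ^ (k + 1) *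
            ((∫ y in (0 : ℝ)..t,
                Real.exp (-lam * y) * y ^ (((k : ℝ) + 1) * α - 1) /
                  Real.Gamma (((k : ℝ) + 1) * α) : ℝ) : ℂ))
      = (((r + lam) ^ α : ℝ) : ℂ) /
          ((r : ℂ) * ((((r + lam) ^ α : ℝ) : ℂ) - Complex.I * (s : ℂ))) := by
  have hb : 0 < r + lam := by linarith
  set p : ℝ := (r + lam) ^ α with hp_def
  have hp : 0 < p := Real.rpow_pos_of_pos hb α
  set c : ℂ := Complex.I * (s:ℂ) with hc_def
  have hcnorm : ‖c‖ = |s| := by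
    rw [hc_def, norm_mul, Complex.norm_I,
      Complex.norm_real, Real.norm_eq_abs, one_mul]
  set β : ℕ → ℝ := fun k => ((k:ℝ)+1)*α with hβ_def
  have hβ : ∀ k, 0 < β k := fun k => by
    have : (0:ℝ) < (k:ℝ)+1 := by positivity
    exact mul_pos this hα0
  have hΓ : ∀ k, 0 < Real.Gamma (β k) := fun k => Real.Gamma_pos_of_pos (hβ k)
  set realF : ℕ → ℝ → ℝ :=
    fun k t => ∫ y in Ioc (0:ℝ) t, Real.exp (-lam*y) * y^(β k - 1) with hrealF_def
  have hFnn : ∀ k t, 0 ≤ realF k t := by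
    intro k t
    simp only [hrealF_def]
    exact aux_F_nonneg lam (β k) t
  have hFmeas : ∀ k, Measurable (realF k) := by
    intro k
    simp only [hrealF_def]
    exact (aux_F_mono (hβ k) hlam).measurable
  have hL1 := fun k => aux_laplace_primitive (hβ k) hlam hr
  set h : ℕ → ℝ → ℂ := fun n t =>
    Complex.exp (-(r:ℂ)*t) * ((Complex.I * (s:ℂ))^n * auxPsi lam α n t) with hh_def
  have hpsi_succ : ∀ k t, auxPsi lam α (k+1) t = ((realF k t / Real.Gamma (β k) : ℝ) : ℂ) := by
    intro k t; rfl
  have hpsi_zero : ∀ t : ℝ, auxPsi lam α 0 t = 1 := fun t => rfl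
  have hpow : ∀ n : ℕ, (1/(r+lam))^(β n) = ((1/p)^(n+1) : ℝ) := by
    intro n
    have h1 : β n = α * ((n:ℝ)+1) := by rw [hβ_def]; ring
    have h2 : ((1:ℝ)/(r+lam)) ^ α = 1/p := by
      rw [one_div, one_div, ← Real.inv_rpow hb.le]
    rw [h1, Real.rpow_mul (by positivity), h2,
      show ((n:ℝ)+1) = ((n+1:ℕ):ℝ) by push_cast; ring, Real.rpow_natCast]
  have hexp_val : ∫ t in Ioi (0:ℝ), Real.exp (-(r*t)) = 1/r := by
    have := aux_exp_int hr 0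
    simpa using this
  have hexpc : ∀ t : ℝ, ((Real.exp (-(r*t)) : ℝ) : ℂ) = Complex.exp (-(r:ℂ)*t) := by
    intro t
    rw [Complex.ofReal_exp]
    norm_num
  have hheq : ∀ k t, h (k+1) t = ((Complex.I*(s:ℂ))^(k+1) * ((Real.Gamma (β k) : ℝ) : ℂ)⁻¹)
      * ((Real.exp (-(r*t)) * realF k t : ℝ) : ℂ) := by
    intro k t
    simp only [hh_def, hpsi_succ]
    rw [Complex.ofReal_mul, hexpc t, Complex.ofReal_div]
    field_simp
  have hzeq : ∀ t : ℝ, h 0 t = ((Real.exp (-(r*t)) : ℝ) : ℂ) := by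
    intro t
    simp only [hh_def, pow_zero, hpsi_zero, one_mul, mul_one]
    exact (hexpc t).symm
  have hInt : ∀ n, IntegrableOn (h n) (Ioi 0) := by
    intro n
    cases n with
    | zero =>
      refine ((exp_neg_integrableOn_Ioi 0 hr).ofReal).congr
        (Filter.Eventually.of_forall fun t => ?_)
      show ((Real.exp (-r*t) : ℝ) : ℂ) = h 0 t
      rw [show (-r*t : ℝ) = -(r*t) by ring]
      exact (hzeq t).symm
    | succ k =>
      have hbase : IntegrableOn (fun t => Real.exp (-(r*t)) * realF k t) (Ioi 0) := by
        simp only [hrealF_def]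
        exact (hL1 k).1
      exact (hbase.ofReal.const_mul
        ((Complex.I*(s:ℂ))^(k+1) * ((Real.Gamma (β k) : ℝ) : ℂ)⁻¹)).congr
        (Filter.Eventually.of_forall fun t => by
          show _ = h (k+1) t
          rw [hheq k t]
          simp [Complex.ofReal_mul])
  have hrealInt : ∀ k, (∫ t in Ioi (0:ℝ), Real.exp (-(r*t)) * realF k t)
      = 1/r * ((1/p)^(k+1) * Real.Gamma (β k)) := by
    intro k
    have : (∫ t in Ioi (0:ℝ), Real.exp (-(r*t)) * realF k t)
        = 1/r * ((1/(r+lam))^(β k) * Real.Gamma (β k)) := by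
      simp only [hrealF_def]
      exact (hL1 k).2
    rw [this, hpow k]
  have hΓ' : ∀ k, ((Real.Gamma (β k) : ℝ) : ℂ) ≠ 0 := fun k => by
    exact_mod_cast (hΓ k).ne'
  have hp' : ((p:ℝ):ℂ) ≠ 0 := by exact_mod_cast hp.ne'
  have hr' : ((r:ℝ):ℂ) ≠ 0 := by exact_mod_cast hr.ne'
  have hV : ∀ n, (∫ t in Ioi (0:ℝ), h n t) = (1/(r:ℂ)) * (c/(p:ℂ))^n := by
    intro n
    cases n with
    | zero =>
      simp_rw [hzeq]
      have hOR : ∫ t in Ioi (0:ℝ), ((Real.exp (-(r*t)) : ℝ) : ℂ)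
          = ((∫ t in Ioi (0:ℝ), Real.exp (-(r*t)) : ℝ) : ℂ) := integral_ofReal
      rw [hOR, hexp_val]
      push_cast
      ring
    | succ k =>
      simp_rw [hheq k]
      rw [integral_const_mul]
      have hOR : ∫ t in Ioi (0:ℝ), ((Real.exp (-(r*t)) * realF k t : ℝ) : ℂ)
          = ((∫ t in Ioi (0:ℝ), Real.exp (-(r*t)) * realF k t : ℝ) : ℂ) := integral_ofReal
      have hcast : ((1/r * ((1/p)^(k+1) * Real.Gamma (β k)) : ℝ) : ℂ)
          = (1/(r:ℂ)) * ((1/((p:ℝ):ℂ))^(k+1) * ((Real.Gamma (β k) : ℝ) : ℂ)) := by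
        push_cast
        ring
      have key : ∀ x g q : ℂ, g ≠ 0 → x * g⁻¹ * (1/(r:ℂ) * (q * g)) = 1/(r:ℂ) * (x*q) := by
        intro x g q hg
        field_simp
      rw [hOR, hrealInt k, hcast, ← hc_def, key _ _ _ (hΓ' k)]
      ring
  have hN : ∀ n, (∫ t in Ioi (0:ℝ), ‖h n t‖) = (1/r) * (|s|/p)^n := by
    intro n
    cases n with
    | zero =>
      have he : ∀ t:ℝ, ‖h 0 t‖ = Real.exp (-(r*t)) := by
        intro t
        rw [hzeq t, Complex.norm_real, Real.norm_eq_abs, abs_of_pos (Real.exp_pos _)]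
      simp_rw [he]
      rw [hexp_val]
      simp
    | succ k =>
      have he : ∀ t:ℝ, ‖h (k+1) t‖ = (|s|^(k+1) * (Real.Gamma (β k))⁻¹)
          * (Real.exp (-(r*t)) * realF k t) := by
        intro t
        rw [hheq k t, norm_mul, norm_mul, norm_pow, hcnorm, norm_inv, Complex.norm_real,
          Complex.norm_real, Real.norm_eq_abs, Real.norm_eq_abs, abs_of_pos (hΓ k),
          abs_of_nonneg (mul_nonneg (Real.exp_pos _).le (hFnn k t))]
      have keyR : ∀ x g q : ℝ, g ≠ 0 → x * g⁻¹ * (1/r * (q * g)) = 1/r * (x*q) := by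
        intro x g q hg
        field_simp
      simp_rw [he]
      rw [integral_const_mul, hrealInt k, keyR _ _ _ (hΓ k).ne']
      rw [div_pow, div_pow]
      ring
  have hq1 : |s|/p < 1 := (div_lt_one hp).2 hs
  have hq0 : (0:ℝ) ≤ |s|/p := by positivity
  have hgeom : Summable (fun n : ℕ => (1/r) * (|s|/p)^n) :=
    (summable_geometric_of_lt_one hq0 hq1).mul_left _
  have hLn : ∀ n, (∫⁻ t in Ioi (0:ℝ), ((‖h n t‖₊ : ℝ≥0∞))) = ENNReal.ofReal ((1/r) * (|s|/p)^n) := by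
    intro n
    rw [← hN n, ofReal_integral_eq_lintegral_ofReal (hInt n).norm
      (Filter.Eventually.of_forall fun t => norm_nonneg _)]
    simp only [ofReal_norm, enorm_eq_nnnorm]
  have hmeas : ∀ n, AEStronglyMeasurable (h n) (volume.restrict (Ioi (0:ℝ))) := by
    intro n
    cases n with
    | zero =>
      refine Measurable.aestronglyMeasurable ?_
      simp only [hh_def, pow_zero, hpsi_zero, one_mul, mul_one]
      exact (Complex.continuous_exp.comp (by fun_prop)).measurable
    | succ k =>
      refine Measurable.aestronglyMeasurable ?_
      simp only [hh_def, hpsi_succ]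
      refine Measurable.mul ?_ (measurable_const.mul ?_)
      · exact (Complex.continuous_exp.comp
          (by fun_prop : Continuous fun t:ℝ => -(r:ℂ)*(t:ℂ))).measurable
      · exact Complex.measurable_ofReal.comp ((hFmeas k).div_const _)
  have hsum_lint : (∑' n, ∫⁻ t in Ioi (0:ℝ), ((‖h n t‖₊ : ℝ≥0∞))) ≠ ⊤ := by
    simp_rw [hLn]
    rw [← ENNReal.ofReal_tsum_of_nonneg (fun n => by positivity) hgeom]
    exact ENNReal.ofReal_ne_top
  have hae_sum : ∀ᵐ t ∂(volume.restrict (Ioi (0:ℝ))), Summable (fun n => h n t) := by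
    have h1 : (∫⁻ t in Ioi (0:ℝ), ∑' n, (‖h n t‖₊ : ℝ≥0∞))
        = ∑' n, ∫⁻ t in Ioi (0:ℝ), ((‖h n t‖₊ : ℝ≥0∞)) :=
      lintegral_tsum (fun n => (hmeas n).enorm)
    have h2 : ∀ᵐ t ∂(volume.restrict (Ioi (0:ℝ))), (∑' n, (‖h n t‖₊ : ℝ≥0∞)) < ⊤ := by
      refine ae_lt_top' (AEMeasurable.ennreal_tsum fun n => (hmeas n).enorm) ?_
      rw [h1]
      exact hsum_lint
    filter_upwards [h2] with t ht
    rw [lt_top_iff_ne_top, ENNReal.tsum_coe_ne_top_iff_summable] at ht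
    exact Summable.of_nnnorm ht
  have hae_eq : ∀ᵐ (t : ℝ) ∂(volume.restrict (Ioi (0:ℝ))),
      Complex.exp (-(r:ℂ)*(t:ℂ)) * (1 + ∑' k : ℕ, (Complex.I * (s:ℂ))^(k+1) *
        ((∫ y in (0:ℝ)..t, Real.exp (-lam*y) * y^(((k:ℝ)+1)*α-1) /
          Real.Gamma (((k:ℝ)+1)*α) : ℝ) : ℂ))
      = ∑' n, h n t := by
    filter_upwards [hae_sum, self_mem_ae_restrict measurableSet_Ioi] with t hsumt ht
    have hivt : ∀ k : ℕ, (∫ y in (0:ℝ)..t,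
        Real.exp (-lam*y) * y^(((k:ℝ)+1)*α-1) / Real.Gamma (((k:ℝ)+1)*α))
        = realF k t / Real.Gamma (β k) := by
      intro k
      rw [intervalIntegral.integral_of_le (le_of_lt ht), integral_div]
    rw [Summable.tsum_eq_zero_add hsumt, hzeq t, hexpc t]
    simp_rw [hheq]
    simp_rw [hivt]
    rw [mul_add, mul_one]
    congr 1
    rw [← tsum_mul_left]
    congr 1
    funext k
    rw [Complex.ofReal_mul, hexpc t, Complex.ofReal_div]
    field_simp
  have hnormcp : ‖c/((p:ℝ):ℂ)‖ < 1 := by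
    rw [norm_div, hcnorm, Complex.norm_real, Real.norm_eq_abs, abs_of_pos hp]
    exact hq1
  have hpc : ((p:ℝ):ℂ) - c ≠ 0 := by
    refine sub_ne_zero.2 fun heq => ?_
    have h1 := congrArg norm heq
    rw [Complex.norm_real, Real.norm_eq_abs, abs_of_pos hp, hcnorm] at h1
    exact absurd h1.symm (ne_of_lt hs)
  calc ∫ t in Ioi (0:ℝ), Complex.exp (-(r:ℂ)*t) *
        (1 + ∑' k : ℕ, (Complex.I * (s:ℂ))^(k+1) *
          ((∫ y in (0:ℝ)..t, Real.exp (-lam*y) * y^(((k:ℝ)+1)*α-1) /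
            Real.Gamma (((k:ℝ)+1)*α) : ℝ) : ℂ))
      = ∫ t in Ioi (0:ℝ), ∑' n, h n t := integral_congr_ae hae_eq
    _ = ∑' n, ∫ t in Ioi (0:ℝ), h n t := integral_tsum hmeas hsum_lint
    _ = ∑' n : ℕ, (1/(r:ℂ)) * (c/((p:ℝ):ℂ))^n := by simp_rw [hV]
    _ = (1/(r:ℂ)) * ∑' n : ℕ, (c/((p:ℝ):ℂ))^n := tsum_mul_left
    _ = (1/(r:ℂ)) * (1 - c/((p:ℝ):ℂ))⁻¹ := by
        rw [tsum_geometric_of_norm_lt_one hnormcp]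
    _ = ((p:ℝ):ℂ) / ((r:ℂ) * (((p:ℝ):ℂ) - c)) := by
        have h1p : (1:ℂ) - c/((p:ℝ):ℂ) = (((p:ℝ):ℂ) - c)/((p:ℝ):ℂ) := by
          field_simp
        rw [h1p]
        field_simp
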